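/- Let μ be a partition of n+2 and let (i,j) be a cell of μ such that (i+1,j) and (i,j+1) also belong to μ. Then M²_{i,j}(X,Y) = M_{μ/{(i,j),(i,j+1)}} + M_{μ/{(i,j),(i+1,j)}}; in particular, for every pair of distinct cells h₁, h₂ in the shadow of (i,j), Δ_{μ/{h₁,h₂}} ∈ M_{μ/{(i,j),(i,j+1)}} + M_{μ/{(i,j),(i+1,j)}}. -/

import Mathlib

open MvPolynomial

noncomputable section

/-- The monomial differential operator `∂^m` applied to a polynomial `Q`:
if `m = (m_v)_v`, this is `∏_v (∂/∂x_v)^{m_v}` applied to `Q`. -/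
def monDiff {σ : Type*} [DecidableEq σ] (m : σ →₀ ℕ) (Q : MvPolynomial σ ℚ) :
    MvPolynomial σ ℚ :=
  ∑ a ∈ Q.support,
    MvPolynomial.monomial (a - m) (Q.coeff a * ∏ v ∈ m.support, ((a v).descFactorial (m v) : ℚ))

/-- The differential operator `P(∂)` applied to `Q`. -/
def applyDiff {σ : Type*} [DecidableEq σ] (P Q : MvPolynomial σ ℚ) : MvPolynomial σ ℚ :=
  ∑ m ∈ P.support, P.coeff m • monDiff m Q

/-- The linear span of `Q` and all its partial derivatives (of all orders),
i.e. the space `L_∂[Q]`. -/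
def derivSpan {σ : Type*} [DecidableEq σ] (Q : MvPolynomial σ ℚ) :
    Submodule ℚ (MvPolynomial σ ℚ) :=
  Submodule.span ℚ {R | ∃ m : σ →₀ ℕ, R = monDiff m Q}

/-- Strict pseudo-lexicographic order: compare second coordinates first. -/
def plexLT {α : Type*} [LinearOrder α] (a b : α × α) : Prop :=
  a.2 < b.2 ∨ (a.2 = b.2 ∧ a.1 < b.1)

/-- Pseudo-lexicographic order on `ℕ × ℕ`. -/
def plexLE (a b : ℕ × ℕ) : Prop :=
  a.2 < b.2 ∨ (a.2 = b.2 ∧ a.1 ≤ b.1)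

instance : DecidableRel plexLE := fun a b => by unfold plexLE; exact inferInstance
instance : IsTrans (ℕ × ℕ) plexLE := ⟨by intro a b c hab hbc; unfold plexLE at *; omega⟩
instance : IsAntisymm (ℕ × ℕ) plexLE := ⟨by
  intro a b hab hba
  unfold plexLE at hab hba
  have h1 : a.1 = b.1 := by omega
  have h2 : a.2 = b.2 := by omega
  exact Prod.ext h1 h2⟩
instance : IsTotal (ℕ × ℕ) plexLE := ⟨by intro a b; unfold plexLE; omega⟩

/-- Lexicographic order on `ℕ × ℕ`: compare first coordinates first. -/
def lexLE (a b : ℕ × ℕ) : Prop :=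
  a.1 < b.1 ∨ (a.1 = b.1 ∧ a.2 ≤ b.2)

/-- Strict lexicographic order on `ℕ × ℕ`. -/
def lexLT (a b : ℕ × ℕ) : Prop :=
  a.1 < b.1 ∨ (a.1 = b.1 ∧ a.2 < b.2)

instance : DecidableRel lexLE := fun a b => by unfold lexLE; exact inferInstance
instance : IsTrans (ℕ × ℕ) lexLE := ⟨by intro a b c hab hbc; unfold lexLE at *; omega⟩
instance : IsAntisymm (ℕ × ℕ) lexLE := ⟨by
  intro a b hab hba
  unfold lexLE at hab hba
  have h1 : a.1 = b.1 := by omega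
  have h2 : a.2 = b.2 := by omega
  exact Prod.ext h1 h2⟩
instance : IsTotal (ℕ × ℕ) lexLE := ⟨by intro a b; unfold lexLE; omega⟩

/-- The lattice determinant of a list of `n` biexponents:
`Δ = det(x_i^{p_j} y_i^{q_j})`, in the ring `ℚ[x_1,…,x_n,y_1,…,y_n]`,
where `Sum.inl i` stands for `x_{i+1}` and `Sum.inr i` for `y_{i+1}`. -/
def deltaOfList (n : ℕ) (L : Fin n → ℕ × ℕ) : MvPolynomial (Fin n ⊕ Fin n) ℚ :=
  Matrix.det (Matrix.of fun i j : Fin n =>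
    X (Sum.inl i) ^ (L j).1 * X (Sum.inr i) ^ (L j).2)

/-- The lattice determinant of a lattice diagram (finite set of cells), the cells
being listed in increasing pseudo-lexicographic order; `0` if the diagram does not
have exactly `n` cells. -/
def deltaOfFinset (n : ℕ) (D : Finset (ℕ × ℕ)) : MvPolynomial (Fin n ⊕ Fin n) ℚ :=
  if h : D.card = n then
    deltaOfList n fun i => (D.sort plexLE).get ⟨i.1, by rw [Finset.length_sort, h]; exact i.2⟩
  else 0

open scoped Classical in
/-- The lattice determinant of a list of integer biexponents: `0` if some coordinate
is negative (and `0` if two biexponents coincide, since then the determinant has two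
equal columns). -/
def deltaOfListZ (n : ℕ) (L : Fin n → ℤ × ℤ) : MvPolynomial (Fin n ⊕ Fin n) ℚ :=
  if ∀ j, 0 ≤ (L j).1 ∧ 0 ≤ (L j).2 then
    deltaOfList n fun j => ((L j).1.toNat, (L j).2.toNat)
  else 0

/-- The Ferrers diagram of a partition with `h` rows and parts `μ 0 ≥ μ 1 ≥ …`:
the set of cells `(r, c)` with `r < h` and `c < μ r`. -/
def ferrers (h : ℕ) (μ : ℕ → ℕ) : Finset (ℕ × ℕ) :=
  (Finset.range h ×ˢ Finset.range (μ 0)).filter fun rc => rc.2 < μ rc.1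

/-- The shadow of the cell `(i, j)` in the diagram `F`. -/
def shadowF (F : Finset (ℕ × ℕ)) (i j : ℕ) : Finset (ℕ × ℕ) :=
  F.filter fun c => i ≤ c.1 ∧ j ≤ c.2

/-- The space `M^k_{i,j}(X,Y)`: the sum of the spaces `M_{μ/S}` over all `k`-element
subsets `S` of the shadow of `(i,j)` in the diagram `F` (of a partition of `n + k`). -/
def Mk (n k : ℕ) (F : Finset (ℕ × ℕ)) (i j : ℕ) :
    Submodule ℚ (MvPolynomial (Fin n ⊕ Fin n) ℚ) :=
  ⨆ S ∈ Finset.powersetCard k (shadowF F i j), derivSpan (deltaOfFinset n (F \ S))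

/-- The submodule of polynomials involving only the `x` variables
(elements of `Y`-degree `0`). -/
def onlyX (n : ℕ) : Submodule ℚ (MvPolynomial (Fin n ⊕ Fin n) ℚ) :=
  Subalgebra.toSubmodule (MvPolynomial.supported ℚ (Set.range Sum.inl))

/-- The space `M^k_{i,j}(X)`: the elements of `M^k_{i,j}(X,Y)` of `Y`-degree 0. -/
def MkX (n k : ℕ) (F : Finset (ℕ × ℕ)) (i j : ℕ) :
    Submodule ℚ (MvPolynomial (Fin n ⊕ Fin n) ℚ) :=
  Mk n k F i j ⊓ onlyX n

end
section Infra
open MvPolynomial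
variable {σ : Type*} [DecidableEq σ]

theorem monDiff_monomial (m a : σ →₀ ℕ) (c : ℚ) :
    monDiff m (monomial a c) =
      monomial (a - m) (c * ∏ v ∈ m.support, ((a v).descFactorial (m v) : ℚ)) := by
  by_cases hc : c = 0
  · simp [monDiff, hc]
  · rw [monDiff, support_monomial, if_neg hc, Finset.sum_singleton, coeff_monomial, if_pos rfl]

theorem monDiff_add (m : σ →₀ ℕ) (P Q : MvPolynomial σ ℚ) :
    monDiff m (P + Q) = monDiff m P + monDiff m Q := by
  have hsub : ∀ R : MvPolynomial σ ℚ, R.support ⊆ P.support ∪ Q.support →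
      monDiff m R = ∑ a ∈ P.support ∪ Q.support,
        monomial (a - m) (R.coeff a * ∏ v ∈ m.support, ((a v).descFactorial (m v) : ℚ)) := by
    intro R hR
    refine Finset.sum_subset hR ?_
    intro a _ ha
    rw [MvPolynomial.notMem_support_iff.mp ha, zero_mul, map_zero]
  rw [hsub (P+Q) (MvPolynomial.support_add), hsub P Finset.subset_union_left,
    hsub Q Finset.subset_union_right, ← Finset.sum_add_distrib]
  refine Finset.sum_congr rfl fun a _ => ?_
  rw [coeff_add, add_mul, map_add]

theorem monDiff_smul (m : σ →₀ ℕ) (s : ℚ) (Q : MvPolynomial σ ℚ) :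
    monDiff m (s • Q) = s • monDiff m Q := by
  have hsub : (s • Q).support ⊆ Q.support := by
    intro a ha
    simp only [MvPolynomial.mem_support_iff] at ha ⊢
    intro h
    rw [MvPolynomial.coeff_smul, h, smul_zero] at ha
    exact ha rfl
  rw [monDiff, monDiff, Finset.smul_sum]
  rw [Finset.sum_subset hsub (by
    intro a _ ha
    rw [MvPolynomial.notMem_support_iff.mp ha, zero_mul, map_zero])]
  refine Finset.sum_congr rfl fun a _ => ?_
  rw [MvPolynomial.coeff_smul, smul_eq_mul, mul_assoc, ← smul_eq_mul (a := s), map_smul]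

/-- `monDiff m` as a linear map. -/
noncomputable def monDiffL (m : σ →₀ ℕ) : MvPolynomial σ ℚ →ₗ[ℚ] MvPolynomial σ ℚ where
  toFun := monDiff m
  map_add' := monDiff_add m
  map_smul' := monDiff_smul m

@[simp] theorem monDiffL_apply (m : σ →₀ ℕ) (Q : MvPolynomial σ ℚ) :
    monDiffL m Q = monDiff m Q := rfl

theorem descFactorial_key (n k l : ℕ) :
    (n.descFactorial k : ℚ) * ((n - k).descFactorial l : ℚ) = (n.descFactorial (k + l) : ℚ) := by
  rw [← Nat.cast_mul, mul_comm ((n:ℕ).descFactorial k)]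
  congr 1
  have := Nat.descFactorial_mul_descFactorial (n := n) (k := k) (m := k + l) (Nat.le_add_right k l)
  simpa using this

theorem monDiff_monDiff (m m' : σ →₀ ℕ) (Q : MvPolynomial σ ℚ) :
    monDiff m' (monDiff m Q) = monDiff (m + m') Q := by
  induction Q using MvPolynomial.induction_on' with
  | monomial a c =>
    rw [monDiff_monomial, monDiff_monomial, monDiff_monomial, tsub_tsub]
    congr 1
    rw [mul_assoc]
    congr 1
    have hext : ∀ (mm : σ →₀ ℕ), mm.support ⊆ m.support ∪ m'.support →
        ∀ b : σ →₀ ℕ, (∏ v ∈ mm.support, ((b v).descFactorial (mm v) : ℚ))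
          = ∏ v ∈ m.support ∪ m'.support, ((b v).descFactorial (mm v) : ℚ) := by
      intro mm hmm b
      refine Finset.prod_subset hmm ?_
      intro v _ hv
      rw [Finsupp.notMem_support_iff.mp hv, Nat.descFactorial_zero, Nat.cast_one]
    rw [hext m Finset.subset_union_left a, hext m' Finset.subset_union_right (a - m),
      hext (m + m') Finsupp.support_add a, ← Finset.prod_mul_distrib]
    refine Finset.prod_congr rfl fun v _ => ?_
    rw [Finsupp.tsub_apply, Finsupp.add_apply]
    exact descFactorial_key (a v) (m v) (m' v)
  | add P Q hP hQ => rw [monDiff_add, monDiff_add, monDiff_add, hP, hQ]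

end Infra
section Infra2
open MvPolynomial
variable {σ : Type*} [DecidableEq σ]

theorem monDiff_zero_eq (Q : MvPolynomial σ ℚ) : monDiff 0 Q = Q := by
  conv_rhs => rw [MvPolynomial.as_sum Q]
  rw [monDiff]
  refine Finset.sum_congr rfl fun a _ => ?_
  simp

theorem mem_derivSpan_self (Q : MvPolynomial σ ℚ) : Q ∈ derivSpan Q := by
  refine Submodule.subset_span ⟨0, (monDiff_zero_eq Q).symm⟩

theorem monDiff_mem_derivSpan {Q x : MvPolynomial σ ℚ} (m : σ →₀ ℕ)
    (hx : x ∈ derivSpan Q) : monDiff m x ∈ derivSpan Q := by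
  induction hx using Submodule.span_induction with
  | mem y hy =>
    obtain ⟨m', rfl⟩ := hy
    rw [monDiff_monDiff]
    exact Submodule.subset_span ⟨m' + m, rfl⟩
  | zero => rw [show monDiff m (0 : MvPolynomial σ ℚ) = 0 from by simp [monDiff]]; exact Submodule.zero_mem _
  | add y z _ _ hy hz => rw [monDiff_add]; exact Submodule.add_mem _ hy hz
  | smul s y _ hy => rw [monDiff_smul]; exact Submodule.smul_mem _ s hy

theorem derivSpan_le_of_monClosed {Q : MvPolynomial σ ℚ} {M : Submodule ℚ (MvPolynomial σ ℚ)}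
    (hQ : Q ∈ M) (hM : ∀ (m : σ →₀ ℕ) x, x ∈ M → monDiff m x ∈ M) :
    derivSpan Q ≤ M := by
  rw [derivSpan, Submodule.span_le]
  rintro y ⟨m, rfl⟩
  exact hM m Q hQ

theorem monDiff_mem_sup {Q₁ Q₂ x : MvPolynomial σ ℚ} (m : σ →₀ ℕ)
    (hx : x ∈ derivSpan Q₁ ⊔ derivSpan Q₂) :
    monDiff m x ∈ derivSpan Q₁ ⊔ derivSpan Q₂ := by
  rw [Submodule.mem_sup] at hx
  obtain ⟨y, hy, z, hz, rfl⟩ := hx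
  rw [monDiff_add]
  exact Submodule.add_mem _ (Submodule.mem_sup_left (monDiff_mem_derivSpan m hy))
    (Submodule.mem_sup_right (monDiff_mem_derivSpan m hz))

theorem smul_mem_iff_of_ne_zero {M : Submodule ℚ (MvPolynomial σ ℚ)} {s : ℚ} (hs : s ≠ 0)
    {x : MvPolynomial σ ℚ} : s • x ∈ M ↔ x ∈ M :=
  M.smul_mem_iff (by exact_mod_cast hs)

end Infra2
section Infra3
open MvPolynomial

/-- Exponent vector of the `σ`-term in the expansion of the lattice determinant. -/
noncomputable def expo (n : ℕ) (L : Fin n → ℕ × ℕ) (σ : Equiv.Perm (Fin n)) :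
    (Fin n ⊕ Fin n) →₀ ℕ :=
  ∑ j : Fin n,
    (Finsupp.single (Sum.inl (σ j)) (L j).1 + Finsupp.single (Sum.inr (σ j)) (L j).2)

/-- The "monomial" differential operator attached to the cell `e`, summed over all
variable pairs: essentially `∑ i ∂x_i^{e.1} ∂y_i^{e.2}`. -/
noncomputable def pk (n : ℕ) (e : ℕ × ℕ) (Q : MvPolynomial (Fin n ⊕ Fin n) ℚ) :
    MvPolynomial (Fin n ⊕ Fin n) ℚ :=
  ∑ i : Fin n,
    monDiff (Finsupp.single (Sum.inl i) e.1 + Finsupp.single (Sum.inr i) e.2) Q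

theorem expo_apply_inl (n : ℕ) (L : Fin n → ℕ × ℕ) (σ : Equiv.Perm (Fin n)) (i : Fin n) :
    expo n L σ (Sum.inl i) = (L (σ⁻¹ i)).1 := by
  rw [expo, Finset.sum_apply']
  rw [Finset.sum_eq_single (σ⁻¹ i)]
  · simp
  · intro b _ hb
    have h1 : σ b ≠ i := fun hc => hb (by simp [← hc])
    simp [Finsupp.single_apply, h1]
  · simp

theorem expo_apply_inr (n : ℕ) (L : Fin n → ℕ × ℕ) (σ : Equiv.Perm (Fin n)) (i : Fin n) :
    expo n L σ (Sum.inr i) = (L (σ⁻¹ i)).2 := by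
  rw [expo, Finset.sum_apply']
  rw [Finset.sum_eq_single (σ⁻¹ i)]
  · simp
  · intro b _ hb
    have h1 : σ b ≠ i := fun hc => hb (by simp [← hc])
    simp [Finsupp.single_apply, h1]
  · simp

theorem prod_monomial_one {n : ℕ} (f : Fin n → ((Fin n ⊕ Fin n) →₀ ℕ)) :
    (∏ t : Fin n, (monomial (f t) (1:ℚ))) = monomial (∑ t : Fin n, f t) 1 := by
  classical
  induction (Finset.univ : Finset (Fin n)) using Finset.induction_on with
  | empty => simp [MvPolynomial.monomial_zero', MvPolynomial.C_1]
  | insert _ _ h ih =>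
    rw [Finset.prod_insert h, Finset.sum_insert h, ih, MvPolynomial.monomial_mul, one_mul]

theorem deltaOfList_eq_sum (n : ℕ) (L : Fin n → ℕ × ℕ) :
    deltaOfList n L
      = ∑ σ : Equiv.Perm (Fin n),
          (((Equiv.Perm.sign σ : ℤˣ) : ℤ) : ℚ) • monomial (expo n L σ) 1 := by
  rw [deltaOfList, Matrix.det_apply']
  refine Finset.sum_congr rfl fun σ _ => ?_
  have : ∏ i : Fin n, (Matrix.of fun i j : Fin n =>
      X (Sum.inl i) ^ (L j).1 * X (Sum.inr i) ^ (L j).2) (σ i) i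
      = monomial (expo n L σ) (1:ℚ) := by
    rw [expo, ← prod_monomial_one (fun j => Finsupp.single (Sum.inl (σ j)) (L j).1
        + Finsupp.single (Sum.inr (σ j)) (L j).2)]
    refine Finset.prod_congr rfl fun t _ => ?_
    rw [Matrix.of_apply, MvPolynomial.X_pow_eq_monomial, MvPolynomial.X_pow_eq_monomial,
      MvPolynomial.monomial_mul, one_mul]
  rw [this, MvPolynomial.smul_eq_C_mul, map_intCast]

end Infra3
section Infra4
open MvPolynomial

theorem monomial_eq_smul {σ' : Type*} (a : σ' →₀ ℕ) (c : ℚ) :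
    (monomial a) c = c • (monomial a (1:ℚ)) := by
  rw [MvPolynomial.smul_eq_C_mul, MvPolynomial.C_mul_monomial, mul_one]

theorem prod_support_m0 {n : ℕ} (i : Fin n) (e : ℕ × ℕ) (b : (Fin n ⊕ Fin n) →₀ ℕ) :
    (∏ v ∈ (Finsupp.single (Sum.inl i) e.1 + Finsupp.single (Sum.inr i) e.2).support,
        ((b v).descFactorial
          (((Finsupp.single (Sum.inl i) e.1 + Finsupp.single (Sum.inr i) e.2 :
            (Fin n ⊕ Fin n) →₀ ℕ)) v) : ℚ))
      = ((b (Sum.inl i)).descFactorial e.1 : ℚ) * ((b (Sum.inr i)).descFactorial e.2 : ℚ) := by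
  set m₀ := Finsupp.single (Sum.inl i) e.1 + Finsupp.single (Sum.inr i) e.2 with hm₀
  have hsub : m₀.support ⊆ ({Sum.inl i, Sum.inr i} : Finset (Fin n ⊕ Fin n)) := by
    refine Finsupp.support_add.trans ?_
    intro v hv
    simp only [Finset.mem_union] at hv
    rcases hv with hv | hv
    · have := Finsupp.support_single_subset hv
      simp only [Finset.mem_singleton] at this
      simp [this]
    · have := Finsupp.support_single_subset hv
      simp only [Finset.mem_singleton] at this
      simp [this]
  have hval1 : m₀ (Sum.inl i) = e.1 := by
    simp [hm₀, Finsupp.single_apply]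
  have hval2 : m₀ (Sum.inr i) = e.2 := by
    simp [hm₀, Finsupp.single_apply]
  rw [show (∏ v ∈ m₀.support, ((b v).descFactorial (m₀ v) : ℚ))
      = ∏ v ∈ ({Sum.inl i, Sum.inr i} : Finset (Fin n ⊕ Fin n)),
          ((b v).descFactorial (m₀ v) : ℚ) from Finset.prod_subset hsub (fun v _ hv => by
    rw [Finsupp.notMem_support_iff.mp hv, Nat.descFactorial_zero, Nat.cast_one])]
  rw [Finset.prod_pair (by simp : (Sum.inl i : Fin n ⊕ Fin n) ≠ Sum.inr i), hval1, hval2]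

theorem expo_update {n : ℕ} (L : Fin n → ℕ × ℕ) (e : ℕ × ℕ) (j₀ : Fin n)
    (σ : Equiv.Perm (Fin n)) :
    expo n (Function.update L j₀ ((L j₀).1 - e.1, (L j₀).2 - e.2)) σ
      = expo n L σ - (Finsupp.single (Sum.inl (σ j₀)) e.1
          + Finsupp.single (Sum.inr (σ j₀)) e.2) := by
  ext v
  rcases v with i | i
  · rw [Finsupp.tsub_apply, expo_apply_inl, expo_apply_inl, Finsupp.add_apply,
      Finsupp.single_apply, Finsupp.single_apply]
    by_cases hi : σ⁻¹ i = j₀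
    · have : σ j₀ = i := by rw [← hi]; simp
      rw [Function.update_apply, if_pos hi, if_pos (by simp [this]), if_neg (by simp)]
      simp [hi]
    · have : (Sum.inl (σ j₀) : Fin n ⊕ Fin n) ≠ Sum.inl i := by
        intro hc
        exact hi (by rw [← Sum.inl_injective hc]; simp)
      rw [Function.update_apply, if_neg hi, if_neg this, if_neg (by simp)]
      simp
  · rw [Finsupp.tsub_apply, expo_apply_inr, expo_apply_inr, Finsupp.add_apply,
      Finsupp.single_apply, Finsupp.single_apply]
    by_cases hi : σ⁻¹ i = j₀
    · have : σ j₀ = i := by rw [← hi]; simp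
      rw [Function.update_apply, if_pos hi, if_neg (by simp), if_pos (by simp [this])]
      simp [hi]
    · have : (Sum.inr (σ j₀) : Fin n ⊕ Fin n) ≠ Sum.inr i := by
        intro hc
        exact hi (by rw [← Sum.inr_injective hc]; simp)
      rw [Function.update_apply, if_neg hi, if_neg (by simp), if_neg this]
      simp

theorem pk_deltaOfList (n : ℕ) (e : ℕ × ℕ) (L : Fin n → ℕ × ℕ) :
    pk n e (deltaOfList n L)
      = ∑ j : Fin n,
          (((L j).1.descFactorial e.1 : ℚ) * ((L j).2.descFactorial e.2 : ℚ))
            • deltaOfList n (Function.update L j ((L j).1 - e.1, (L j).2 - e.2)) := by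
  rw [pk]
  have step1 : ∀ i : Fin n,
      monDiff (Finsupp.single (Sum.inl i) e.1 + Finsupp.single (Sum.inr i) e.2)
          (deltaOfList n L)
        = ∑ σ : Equiv.Perm (Fin n),
            (((Equiv.Perm.sign σ : ℤˣ) : ℤ) : ℚ) •
              ((((L (σ⁻¹ i)).1.descFactorial e.1 : ℚ) * ((L (σ⁻¹ i)).2.descFactorial e.2 : ℚ))
                • monomial (expo n L σ
                    - (Finsupp.single (Sum.inl i) e.1 + Finsupp.single (Sum.inr i) e.2)) 1) := by
    intro i
    rw [deltaOfList_eq_sum, show (monDiff (Finsupp.single (Sum.inl i) e.1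
        + Finsupp.single (Sum.inr i) e.2)) = ⇑(monDiffL (σ := Fin n ⊕ Fin n)
          (Finsupp.single (Sum.inl i) e.1 + Finsupp.single (Sum.inr i) e.2)) from rfl,
      map_sum]
    refine Finset.sum_congr rfl fun σ _ => ?_
    rw [map_smul, monDiffL_apply, monDiff_monomial, one_mul, prod_support_m0,
      expo_apply_inl, expo_apply_inr, monomial_eq_smul]
  rw [Finset.sum_congr rfl (fun i _ => step1 i), Finset.sum_comm]
  rw [Finset.sum_congr rfl (fun σ _ => (Equiv.sum_comp σ (fun i =>
    (((Equiv.Perm.sign σ : ℤˣ) : ℤ) : ℚ) •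
      ((((L (σ⁻¹ i)).1.descFactorial e.1 : ℚ) * ((L (σ⁻¹ i)).2.descFactorial e.2 : ℚ))
        • monomial (expo n L σ
            - (Finsupp.single (Sum.inl i) e.1 + Finsupp.single (Sum.inr i) e.2)) 1))).symm)]
  rw [Finset.sum_comm]
  refine Finset.sum_congr rfl fun j _ => ?_
  rw [deltaOfList_eq_sum, Finset.smul_sum]
  refine Finset.sum_congr rfl fun σ _ => ?_
  rw [Equiv.Perm.inv_def, Equiv.symm_apply_apply, expo_update]
  rw [smul_comm]

end Infra4
section Infra5
open MvPolynomial

theorem deltaOfList_eq_zero_of_eq {n : ℕ} (L : Fin n → ℕ × ℕ) {j j' : Fin n}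
    (hjj : j ≠ j') (h : L j = L j') : deltaOfList n L = 0 := by
  rw [deltaOfList, ← Matrix.det_transpose]
  refine Matrix.det_zero_of_row_eq hjj ?_
  funext i
  simp only [Matrix.transpose_apply, Matrix.of_apply, h]

theorem deltaOfList_comp_perm (n : ℕ) (L : Fin n → ℕ × ℕ) (π : Equiv.Perm (Fin n)) :
    deltaOfList n (L ∘ π) = (((Equiv.Perm.sign π : ℤˣ) : ℤ) : ℚ) • deltaOfList n L := by
  have hM : (Matrix.of fun i j : Fin n =>
        X (Sum.inl i) ^ ((L ∘ π) j).1 * X (Sum.inr i) ^ ((L ∘ π) j).2)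
      = (Matrix.of fun i j : Fin n =>
          (X (Sum.inl i) : MvPolynomial (Fin n ⊕ Fin n) ℚ) ^ (L j).1
            * X (Sum.inr i) ^ (L j).2).submatrix id ⇑π := rfl
  rw [deltaOfList, deltaOfList, hM, Matrix.det_permute', MvPolynomial.smul_eq_C_mul,
    map_intCast]

theorem deltaOfList_swap (n : ℕ) (L : Fin n → ℕ × ℕ) {a b : Fin n} (hab : a ≠ b) :
    deltaOfList n (L ∘ Equiv.swap a b) = - deltaOfList n L := by
  rw [deltaOfList_comp_perm, Equiv.Perm.sign_swap hab]
  norm_num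

theorem exists_perm_delta {n : ℕ} {L L' : Fin n → ℕ × ℕ} (hL' : Function.Injective L')
    (hsub : ∀ t, ∃ s, L s = L' t) :
    ∃ s : ℚ, (s = 1 ∨ s = -1) ∧ deltaOfList n L' = s • deltaOfList n L := by
  choose f hf using hsub
  have hfinj : Function.Injective f := by
    intro t₁ t₂ ht
    apply hL'
    rw [← hf t₁, ← hf t₂, ht]
  have hfbij : Function.Bijective f := (Fintype.bijective_iff_injective_and_card f).mpr ⟨hfinj, rfl⟩
  let π : Equiv.Perm (Fin n) := Equiv.ofBijective f hfbij
  have hLL : L' = L ∘ π := by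
    funext t
    exact (hf t).symm
  refine ⟨(((Equiv.Perm.sign π : ℤˣ) : ℤ) : ℚ), ?_, ?_⟩
  · rcases Int.units_eq_one_or (Equiv.Perm.sign π) with h | h <;> rw [h] <;> norm_num
  · rw [hLL, deltaOfList_comp_perm]

/-- `L` is an injective enumeration of the cells of `D`. -/
def IsEnum (n : ℕ) (D : Finset (ℕ × ℕ)) (L : Fin n → ℕ × ℕ) : Prop :=
  Function.Injective L ∧ ∀ t, L t ∈ D

theorem IsEnum.surj {n : ℕ} {D : Finset (ℕ × ℕ)} {L : Fin n → ℕ × ℕ}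
    (hL : IsEnum n D L) (hD : D.card = n) : ∀ x ∈ D, ∃ t, L t = x := by
  intro x hx
  have hbij : Function.Bijective (fun t : Fin n => (⟨L t, hL.2 t⟩ : {y // y ∈ D})) := by
    refine (Fintype.bijective_iff_injective_and_card _).mpr ⟨?_, ?_⟩
    · intro t₁ t₂ ht
      exact hL.1 (by simpa using congrArg Subtype.val ht)
    · simp [Fintype.card_coe, hD]
  obtain ⟨t, ht⟩ := hbij.2 ⟨x, hx⟩
  exact ⟨t, congrArg Subtype.val ht⟩

theorem delta_mem_iff_of_enums {n : ℕ} {D : Finset (ℕ × ℕ)} {L L' : Fin n → ℕ × ℕ}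
    (hD : D.card = n) (hL : IsEnum n D L) (hL' : IsEnum n D L')
    {V : Submodule ℚ (MvPolynomial (Fin n ⊕ Fin n) ℚ)} :
    deltaOfList n L ∈ V ↔ deltaOfList n L' ∈ V := by
  have key : ∀ (A B : Fin n → ℕ × ℕ), IsEnum n D A → IsEnum n D B →
      deltaOfList n A ∈ V → deltaOfList n B ∈ V := by
    intro A B hA hB hmem
    obtain ⟨s, hs, heq⟩ := exists_perm_delta hB.1 (fun t => hA.surj hD (B t) (hB.2 t))
    rw [heq]
    exact Submodule.smul_mem _ s hmem
  exact ⟨key L L' hL hL', key L' L hL' hL⟩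

/-- The sorted enumeration of a finset of cells. -/
noncomputable def sortFun (n : ℕ) (D : Finset (ℕ × ℕ)) (hD : D.card = n) : Fin n → ℕ × ℕ :=
  fun i => (D.sort plexLE).get ⟨i.1, by rw [Finset.length_sort, hD]; exact i.2⟩

theorem sortFun_isEnum (n : ℕ) (D : Finset (ℕ × ℕ)) (hD : D.card = n) :
    IsEnum n D (sortFun n D hD) := by
  constructor
  · intro t₁ t₂ ht
    have hnd := Finset.sort_nodup (s := D) (r := plexLE)
    have h2 := List.nodup_iff_injective_get.mp hnd ht
    exact Fin.ext (by simpa using h2)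
  · intro t
    have h4 : sortFun n D hD t ∈ D.sort plexLE := List.get_mem _ _
    exact (Finset.mem_sort (r := plexLE)).mp h4

theorem deltaOfFinset_eq_sortFun (n : ℕ) (D : Finset (ℕ × ℕ)) (hD : D.card = n) :
    deltaOfFinset n D = deltaOfList n (sortFun n D hD) := by
  rw [deltaOfFinset, dif_pos hD]
  rfl

theorem deltaOfFinset_mem_iff {n : ℕ} {D : Finset (ℕ × ℕ)} (hD : D.card = n)
    {L : Fin n → ℕ × ℕ} (hL : IsEnum n D L)
    {V : Submodule ℚ (MvPolynomial (Fin n ⊕ Fin n) ℚ)} :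
    deltaOfFinset n D ∈ V ↔ deltaOfList n L ∈ V := by
  rw [deltaOfFinset_eq_sortFun n D hD]
  exact delta_mem_iff_of_enums hD (sortFun_isEnum n D hD) hL

end Infra5
section Infra6
open MvPolynomial

theorem mem_ferrers_iff {h : ℕ} {μ : ℕ → ℕ} (hanti : Antitone μ) {x : ℕ × ℕ} :
    x ∈ ferrers h μ ↔ x.1 < h ∧ x.2 < μ x.1 := by
  rw [ferrers, Finset.mem_filter, Finset.mem_product, Finset.mem_range, Finset.mem_range]
  constructor
  · rintro ⟨⟨h1, _⟩, h3⟩; exact ⟨h1, h3⟩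
  · rintro ⟨h1, h2⟩
    exact ⟨⟨h1, lt_of_lt_of_le h2 (hanti (Nat.zero_le x.1))⟩, h2⟩

theorem ferrers_lower {h : ℕ} {μ : ℕ → ℕ} (hanti : Antitone μ) {x y : ℕ × ℕ}
    (hx : x ∈ ferrers h μ) (h1 : y.1 ≤ x.1) (h2 : y.2 ≤ x.2) : y ∈ ferrers h μ := by
  rw [mem_ferrers_iff hanti] at hx ⊢
  exact ⟨lt_of_le_of_lt h1 hx.1, lt_of_le_of_lt h2 (lt_of_lt_of_le hx.2 (hanti h1))⟩

theorem sum_two_terms {M : Type*} [AddCommMonoid M] {n : ℕ} (f : Fin n → M) {j₁ j₂ : Fin n}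
    (hne : j₁ ≠ j₂) (hz : ∀ t, t ≠ j₁ → t ≠ j₂ → f t = 0) :
    ∑ t : Fin n, f t = f j₁ + f j₂ := by
  rw [← Finset.sum_pair hne]
  refine (Finset.sum_subset (Finset.subset_univ _) ?_).symm
  intro x _ hx
  simp only [Finset.mem_insert, Finset.mem_singleton, not_or] at hx
  exact hz x hx.1 hx.2

theorem sum_one_term {M : Type*} [AddCommMonoid M] {n : ℕ} (f : Fin n → M) (j₁ : Fin n)
    (hz : ∀ t, t ≠ j₁ → f t = 0) :
    ∑ t : Fin n, f t = f j₁ := by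
  rw [← Finset.sum_singleton f j₁]
  refine (Finset.sum_subset (Finset.subset_univ _) ?_).symm
  intro x _ hx
  simp only [Finset.mem_singleton] at hx
  exact hz x hx

theorem term_vanish {n hh : ℕ} {μ : ℕ → ℕ} (hanti : Antitone μ)
    {L : Fin n → ℕ × ℕ} (hinj : Function.Injective L)
    (hLF : ∀ t, L t ∈ ferrers hh μ)
    {A B : ℕ × ℕ}
    (hcover : ∀ x ∈ ferrers hh μ, x = A ∨ x = B ∨ ∃ s, L s = x)
    {e : ℕ × ℕ} (he : e ≠ (0, 0)) (t : Fin n)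
    (htA : L t ≠ (A.1 + e.1, A.2 + e.2)) (htB : L t ≠ (B.1 + e.1, B.2 + e.2)) :
    (((L t).1.descFactorial e.1 : ℚ) * ((L t).2.descFactorial e.2 : ℚ))
      • deltaOfList n (Function.update L t ((L t).1 - e.1, (L t).2 - e.2)) = 0 := by
  by_cases hle : e.1 ≤ (L t).1 ∧ e.2 ≤ (L t).2
  · set v : ℕ × ℕ := ((L t).1 - e.1, (L t).2 - e.2) with hv
    have hvF : v ∈ ferrers hh μ :=
      ferrers_lower hanti (hLF t) (by rw [hv]; exact Nat.sub_le _ _)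
        (by rw [hv]; exact Nat.sub_le _ _)
    have hvA : v ≠ A := by
      intro hc
      apply htA
      have h1 : (L t).1 - e.1 = A.1 := congrArg Prod.fst hc
      have h2 : (L t).2 - e.2 = A.2 := congrArg Prod.snd hc
      exact Prod.ext (by omega) (by omega)
    have hvB : v ≠ B := by
      intro hc
      apply htB
      have h1 : (L t).1 - e.1 = B.1 := congrArg Prod.fst hc
      have h2 : (L t).2 - e.2 = B.2 := congrArg Prod.snd hc
      exact Prod.ext (by omega) (by omega)
    have hvt : v ≠ L t := by
      intro hc
      have h1 : (L t).1 - e.1 = (L t).1 := congrArg Prod.fst hc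
      have h2 : (L t).2 - e.2 = (L t).2 := congrArg Prod.snd hc
      apply he
      have : e.1 = 0 := by omega
      have : e.2 = 0 := by omega
      exact Prod.ext (by omega) (by omega)
    obtain ⟨s, hs⟩ := (hcover v hvF).resolve_left hvA |>.resolve_left hvB
    have hst : s ≠ t := fun hc => hvt (by rw [← hs, hc])
    have : deltaOfList n (Function.update L t v) = 0 := by
      refine deltaOfList_eq_zero_of_eq _ hst ?_
      rw [Function.update_apply, if_neg hst, Function.update_self, hs]
    rw [this, smul_zero]
  · rw [not_and_or] at hle
    rcases hle with hle | hle
    · rw [show ((L t).1.descFactorial e.1 : ℚ) = 0 from by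
        rw [Nat.descFactorial_eq_zero_iff_lt.mpr (by omega)]; norm_num, zero_mul, zero_smul]
    · rw [show ((L t).2.descFactorial e.2 : ℚ) = 0 from by
        rw [Nat.descFactorial_eq_zero_iff_lt.mpr (by omega)]; norm_num, mul_zero, zero_smul]

theorem isEnum_update {n : ℕ} {D : Finset (ℕ × ℕ)} {L : Fin n → ℕ × ℕ}
    (hL : IsEnum n D L) (j₀ : Fin n) {v : ℕ × ℕ} (hv : v ∉ D) :
    IsEnum n (insert v (D.erase (L j₀))) (Function.update L j₀ v) := by
  constructor
  · intro t₁ t₂ ht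
    by_cases h1 : t₁ = j₀ <;> by_cases h2 : t₂ = j₀
    · rw [h1, h2]
    · exfalso
      rw [Function.update_apply, Function.update_apply, if_pos h1, if_neg h2] at ht
      exact hv (ht ▸ hL.2 t₂)
    · exfalso
      rw [Function.update_apply, Function.update_apply, if_neg h1, if_pos h2] at ht
      exact hv (ht ▸ hL.2 t₁)
    · rw [Function.update_apply, Function.update_apply, if_neg h1, if_neg h2] at ht
      exact hL.1 ht
  · intro t
    by_cases h1 : t = j₀
    · rw [Function.update_apply, if_pos h1]
      exact Finset.mem_insert_self v _
    · rw [Function.update_apply, if_neg h1]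
      refine Finset.mem_insert_of_mem (Finset.mem_erase.mpr ⟨?_, hL.2 t⟩)
      intro hc
      exact h1 (hL.1 hc)

theorem holes_update₁ {F : Finset (ℕ × ℕ)} {A B w : ℕ × ℕ} (hAF : A ∈ F)
    (hwA : w ≠ A) (hwB : w ≠ B) (hAB : A ≠ B) :
    insert A ((F \ {A, B}).erase w) = F \ {w, B} := by
  ext x
  by_cases h1 : x = A <;> by_cases h2 : x = B <;> by_cases h3 : x = w <;>
    simp_all [Finset.mem_insert, Finset.mem_erase, Finset.mem_sdiff, Finset.mem_singleton]

theorem holes_update₂ {F : Finset (ℕ × ℕ)} {A B w : ℕ × ℕ} (hBF : B ∈ F)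
    (hwA : w ≠ A) (hwB : w ≠ B) (hAB : A ≠ B) :
    insert B ((F \ {A, B}).erase w) = F \ {A, w} := by
  have h1 : ({A, B} : Finset (ℕ × ℕ)) = {B, A} := Finset.pair_comm A B
  have h2 : ({A, w} : Finset (ℕ × ℕ)) = {w, A} := Finset.pair_comm A w
  rw [h1, h2]
  exact holes_update₁ hBF hwB hwA (Ne.symm hAB)

theorem card_sdiff_pair {F : Finset (ℕ × ℕ)} {n : ℕ} (hF : F.card = n + 2)
    {A B : ℕ × ℕ} (hA : A ∈ F) (hB : B ∈ F) (hAB : A ≠ B) :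
    (F \ {A, B}).card = n := by
  rw [Finset.card_sdiff_of_subset (by
    intro x hx
    simp only [Finset.mem_insert, Finset.mem_singleton] at hx
    rcases hx with rfl | rfl <;> assumption)]
  rw [hF, Finset.card_insert_of_notMem (by simp [hAB]), Finset.card_singleton]
  omega

theorem pk_mem_sup {n : ℕ} (e : ℕ × ℕ) {Q₁ Q₂ x : MvPolynomial (Fin n ⊕ Fin n) ℚ}
    (hx : x ∈ derivSpan Q₁ ⊔ derivSpan Q₂) : pk n e x ∈ derivSpan Q₁ ⊔ derivSpan Q₂ := by
  rw [pk]
  exact Submodule.sum_mem _ fun i _ => monDiff_mem_sup _ hx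

end Infra6
section Main
open MvPolynomial

theorem thmA {n hh i j : ℕ} {μ : ℕ → ℕ} (hanti : Antitone μ)
    (hcard : (ferrers hh μ).card = n + 2)
    (hc1 : (i, j) ∈ ferrers hh μ) :
    ∀ N (K : ℕ × ℕ), K ∈ ferrers hh μ → i ≤ K.1 → j ≤ K.2 → K ≠ (i, j) → K.1 + K.2 = N →
    deltaOfFinset n (ferrers hh μ \ {(i, j), K})
      ∈ derivSpan (deltaOfFinset n (ferrers hh μ \ {(i, j), (i, j + 1)}))
        ⊔ derivSpan (deltaOfFinset n (ferrers hh μ \ {(i, j), (i + 1, j)})) := by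
  intro N
  induction N using Nat.strong_induction_on with
  | _ N IH =>
  intro K hKF hKi hKj hKc hKN
  have hKcomp : K.1 ≠ i ∨ K.2 ≠ j := by
    by_contra hc
    push_neg at hc
    exact hKc (Prod.ext hc.1 hc.2)
  have hd1 : 1 ≤ (K.1 - i) + (K.2 - j) := by omega
  by_cases hbase : (K.1 - i) + (K.2 - j) = 1
  · -- base case: K is one of the two cells adjacent to the corner
    rcases (show (K.1 = i + 1 ∧ K.2 = j) ∨ (K.1 = i ∧ K.2 = j + 1) by omega) with h | h
    · have hK : K = (i + 1, j) := Prod.ext h.1 h.2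
      rw [hK]
      exact Submodule.mem_sup_right (mem_derivSpan_self _)
    · have hK : K = (i, j + 1) := Prod.ext h.1 h.2
      rw [hK]
      exact Submodule.mem_sup_left (mem_derivSpan_self _)
  · have hd2 : 2 ≤ (K.1 - i) + (K.2 - j) := by omega
    by_cases heven : (K.1 - i) % 2 = 0 ∧ (K.2 - j) % 2 = 0
    · -- even case: single-term relation
      obtain ⟨f1, hf1⟩ : ∃ f1, K.1 - i = 2 * f1 := ⟨(K.1 - i) / 2, by omega⟩
      obtain ⟨f2, hf2⟩ : ∃ f2, K.2 - j = 2 * f2 := ⟨(K.2 - j) / 2, by omega⟩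
      have hfpos : 1 ≤ f1 + f2 := by omega
      have hKfF : (i + f1, j + f2) ∈ ferrers hh μ :=
        ferrers_lower hanti hKF (by show i + f1 ≤ K.1; omega) (by show j + f2 ≤ K.2; omega)
      have hKfc : (i + f1, j + f2) ≠ (i, j) := by
        intro hc
        have h1 := congrArg Prod.fst hc
        have h2 := congrArg Prod.snd hc
        simp only at h1 h2
        omega
      have hKfK : (i + f1, j + f2) ≠ K := by
        intro hc
        have h1 := congrArg Prod.fst hc
        have h2 := congrArg Prod.snd hc
        simp only at h1 h2
        omega
      have hcK : ((i, j) : ℕ × ℕ) ≠ K := Ne.symm hKc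
      have hD₀ : (ferrers hh μ \ {(i, j), (i + f1, j + f2)}).card = n :=
        card_sdiff_pair hcard hc1 hKfF (Ne.symm hKfc)
      set D₀ := ferrers hh μ \ {(i, j), (i + f1, j + f2)} with hD₀def
      have hL := sortFun_isEnum n D₀ hD₀
      set L := sortFun n D₀ hD₀ with hLdef
      have hKD₀ : K ∈ D₀ := by
        rw [hD₀def, Finset.mem_sdiff]
        refine ⟨hKF, ?_⟩
        simp only [Finset.mem_insert, Finset.mem_singleton]
        push_neg
        exact ⟨Ne.symm hcK, Ne.symm hKfK⟩
      obtain ⟨j₂, hj₂⟩ := hL.surj hD₀ K hKD₀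
      have hLF : ∀ t, L t ∈ ferrers hh μ := fun t => (Finset.mem_sdiff.mp (hL.2 t)).1
      have hcover : ∀ x ∈ ferrers hh μ, x = ((i,j) : ℕ × ℕ) ∨ x = (i + f1, j + f2) ∨
          ∃ s, L s = x := by
        intro x hx
        by_cases h1 : x = ((i,j) : ℕ × ℕ)
        · exact Or.inl h1
        by_cases h2 : x = ((i + f1, j + f2) : ℕ × ℕ)
        · exact Or.inr (Or.inl h2)
        refine Or.inr (Or.inr (hL.surj hD₀ x ?_))
        rw [hD₀def, Finset.mem_sdiff]
        exact ⟨hx, by simp [h1, h2]⟩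
      have he : ((f1, f2) : ℕ × ℕ) ≠ (0, 0) := by
        intro hc
        have h1 := congrArg Prod.fst hc
        have h2 := congrArg Prod.snd hc
        simp only at h1 h2
        omega
      have heq := pk_deltaOfList n (f1, f2) L
      rw [sum_one_term _ j₂ (fun t ht => by
        refine term_vanish (A := (i,j)) (B := (i + f1, j + f2)) hanti hL.1 hLF hcover he t ?_ ?_
        · show L t ≠ (i + f1, j + f2)
          intro hc
          have := hL.2 t
          rw [hc, hD₀def, Finset.mem_sdiff] at this
          simp at this
        · show L t ≠ (i + f1 + f1, j + f2 + f2)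
          intro hc
          apply ht
          apply hL.1
          rw [hj₂, hc]
          exact Prod.ext (by show i + f1 + f1 = K.1; omega) (by show j + f2 + f2 = K.2; omega))]
        at heq
      rw [hj₂] at heq
      have hval : ((K.1 - f1, K.2 - f2) : ℕ × ℕ) = (i + f1, j + f2) :=
        Prod.ext (by show K.1 - f1 = i + f1; omega) (by show K.2 - f2 = j + f2; omega)
      rw [hval] at heq
      have hupd : IsEnum n (ferrers hh μ \ {(i, j), K})
          (Function.update L j₂ (i + f1, j + f2)) := by
        have h1 := isEnum_update hL (j₀ := j₂) (v := (i + f1, j + f2)) (by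
          rw [hD₀def, Finset.mem_sdiff]
          simp)
        rw [hj₂] at h1
        rwa [hD₀def, holes_update₂ hKfF hcK.symm hKfK.symm (Ne.symm hKfc)] at h1
      have hcardK : (ferrers hh μ \ {(i, j), K}).card = n :=
        card_sdiff_pair hcard hc1 hKF hcK
      rw [deltaOfFinset_mem_iff hcardK hupd]
      have hmemL : deltaOfList n L
          ∈ derivSpan (deltaOfFinset n (ferrers hh μ \ {(i, j), (i, j + 1)}))
            ⊔ derivSpan (deltaOfFinset n (ferrers hh μ \ {(i, j), (i + 1, j)})) := by
        rw [← deltaOfFinset_mem_iff hD₀ hL]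
        exact IH ((i + f1) + (j + f2)) (by omega) (i + f1, j + f2) hKfF
          (by simp) (by simp) hKfc rfl
      have hpk := pk_mem_sup (n := n) (f1, f2) hmemL
      rw [heq] at hpk
      have hcoef : ((K.1.descFactorial f1 : ℚ) * (K.2.descFactorial f2 : ℚ)) ≠ 0 := by
        refine mul_ne_zero ?_ ?_ <;>
        · rw [Nat.cast_ne_zero]
          intro hc
          rw [Nat.descFactorial_eq_zero_iff_lt] at hc
          omega
      exact (smul_mem_iff_of_ne_zero hcoef).mp hpk
    · -- odd case: two-equation elimination
      obtain ⟨f1, f2, hfsum, hfle1, hfle2, hf2ne⟩ :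
          ∃ f1 f2, f1 + f2 = 1 ∧ f1 ≤ K.1 - i ∧ f2 ≤ K.2 - j ∧
            (2 * f1 ≠ K.1 - i ∨ 2 * f2 ≠ K.2 - j) := by
        by_cases hpos : 0 < K.1 - i
        · exact ⟨1, 0, rfl, by omega, by omega, by omega⟩
        · exact ⟨0, 1, rfl, by omega, by omega, by omega⟩
      obtain ⟨g1, hg1⟩ : ∃ g1, K.1 = i + f1 + g1 := ⟨K.1 - i - f1, by omega⟩
      obtain ⟨g2, hg2⟩ : ∃ g2, K.2 = j + f2 + g2 := ⟨K.2 - j - f2, by omega⟩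
      have hg0 : 1 ≤ g1 + g2 := by omega
      have pairne : ∀ a b a' b' : ℕ, (a ≠ a' ∨ b ≠ b') → ((a, b) : ℕ × ℕ) ≠ (a', b') := by
        intro a b a' b' hor hc
        have h1 := congrArg Prod.fst hc
        have h2 := congrArg Prod.snd hc
        simp only at h1 h2
        tauto
      have hCfF : (i + f1, j + f2) ∈ ferrers hh μ :=
        ferrers_lower hanti hKF (by show i + f1 ≤ K.1; omega) (by show j + f2 ≤ K.2; omega)
      have hKfF : (K.1 - f1, K.2 - f2) ∈ ferrers hh μ :=
        ferrers_lower hanti hKF (by show K.1 - f1 ≤ K.1; omega)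
          (by show K.2 - f2 ≤ K.2; omega)
      have hCfc : ((i + f1, j + f2) : ℕ × ℕ) ≠ (i, j) := pairne _ _ _ _ (by omega)
      have hKfc : ((K.1 - f1, K.2 - f2) : ℕ × ℕ) ≠ (i, j) := pairne _ _ _ _ (by omega)
      have hCfKf : ((i + f1, j + f2) : ℕ × ℕ) ≠ (K.1 - f1, K.2 - f2) :=
        pairne _ _ _ _ (by omega)
      have hCfK : ((i + f1, j + f2) : ℕ × ℕ) ≠ K := by
        intro hc
        have h1 := congrArg Prod.fst hc
        have h2 := congrArg Prod.snd hc
        simp only at h1 h2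
        omega
      have hKfK : ((K.1 - f1, K.2 - f2) : ℕ × ℕ) ≠ K := by
        intro hc
        have h1 := congrArg Prod.fst hc
        have h2 := congrArg Prod.snd hc
        simp only at h1 h2
        omega
      have hcK : ((i, j) : ℕ × ℕ) ≠ K := Ne.symm hKc
      -- first diagram and enumeration
      have hD₀ : (ferrers hh μ \ {(i, j), (K.1 - f1, K.2 - f2)}).card = n :=
        card_sdiff_pair hcard hc1 hKfF (Ne.symm hKfc)
      set D₀ := ferrers hh μ \ {(i, j), (K.1 - f1, K.2 - f2)} with hD₀def
      have hL₀ := sortFun_isEnum n D₀ hD₀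
      set L₀ := sortFun n D₀ hD₀ with hL₀def
      have hCfD₀ : ((i + f1, j + f2) : ℕ × ℕ) ∈ D₀ := by
        rw [hD₀def, Finset.mem_sdiff]
        exact ⟨hCfF, by simp [hCfc, hCfKf]⟩
      have hKD₀ : K ∈ D₀ := by
        rw [hD₀def, Finset.mem_sdiff]
        exact ⟨hKF, by simp [Ne.symm hcK, Ne.symm hKfK]⟩
      obtain ⟨j₁, hj₁⟩ := hL₀.surj hD₀ _ hCfD₀
      obtain ⟨j₂, hj₂⟩ := hL₀.surj hD₀ K hKD₀
      have hj₁₂ : j₁ ≠ j₂ := by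
        intro hc
        exact hCfK (by rw [← hj₁, hc, hj₂])
      have hL₀F : ∀ t, L₀ t ∈ ferrers hh μ := fun t => (Finset.mem_sdiff.mp (hL₀.2 t)).1
      have hcover₀ : ∀ x ∈ ferrers hh μ, x = ((i, j) : ℕ × ℕ) ∨
          x = ((K.1 - f1, K.2 - f2) : ℕ × ℕ) ∨ ∃ s, L₀ s = x := by
        intro x hx
        by_cases h1 : x = ((i, j) : ℕ × ℕ)
        · exact Or.inl h1
        by_cases h2 : x = ((K.1 - f1, K.2 - f2) : ℕ × ℕ)
        · exact Or.inr (Or.inl h2)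
        refine Or.inr (Or.inr (hL₀.surj hD₀ x ?_))
        rw [hD₀def, Finset.mem_sdiff]
        exact ⟨hx, by simp [h1, h2]⟩
      have hef : ((f1, f2) : ℕ × ℕ) ≠ (0, 0) := pairne _ _ _ _ (by omega)
      -- Equation I
      have heqI := pk_deltaOfList n (f1, f2) L₀
      rw [sum_two_terms _ hj₁₂ (fun t ht1 ht2 => by
        refine term_vanish (A := (i, j)) (B := (K.1 - f1, K.2 - f2)) hanti hL₀.1 hL₀F
          hcover₀ hef t ?_ ?_
        · show L₀ t ≠ (i + f1, j + f2)
          intro hc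
          exact ht1 (hL₀.1 (by rw [hj₁, hc]))
        · show L₀ t ≠ (K.1 - f1 + f1, K.2 - f2 + f2)
          intro hc
          refine ht2 (hL₀.1 ?_)
          rw [hj₂, hc]
          exact Prod.ext (by show K.1 - f1 + f1 = K.1; omega)
            (by show K.2 - f2 + f2 = K.2; omega))] at heqI
      rw [hj₁, hj₂] at heqI
      rw [show (((i + f1, j + f2) : ℕ × ℕ).1 - f1, ((i + f1, j + f2) : ℕ × ℕ).2 - f2)
          = ((i, j) : ℕ × ℕ) from Prod.ext (by show i + f1 - f1 = i; omega)
            (by show j + f2 - f2 = j; omega)] at heqI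
      -- second diagram: replace the cell (i+f1,j+f2) by the hole (K.1-f1,K.2-f2)
      have hKfD₀ : ((K.1 - f1, K.2 - f2) : ℕ × ℕ) ∉ D₀ := by
        rw [hD₀def, Finset.mem_sdiff]
        simp
      set L₁ := Function.update L₀ j₁ ((K.1 - f1, K.2 - f2) : ℕ × ℕ) with hL₁def
      have hL₁enum : IsEnum n (ferrers hh μ \ {(i, j), (i + f1, j + f2)}) L₁ := by
        have h1 := isEnum_update hL₀ (j₀ := j₁) (v := ((K.1 - f1, K.2 - f2) : ℕ × ℕ)) hKfD₀
        rw [hj₁, hD₀def, holes_update₂ hKfF hCfc hCfKf (Ne.symm hKfc)] at h1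
        exact h1
      have hD₁ : (ferrers hh μ \ {(i, j), (i + f1, j + f2)}).card = n :=
        card_sdiff_pair hcard hc1 hCfF (Ne.symm hCfc)
      have hL₁j₁ : L₁ j₁ = ((K.1 - f1, K.2 - f2) : ℕ × ℕ) := by
        rw [hL₁def, Function.update_self]
      have hL₁j₂ : L₁ j₂ = K := by
        rw [hL₁def, Function.update_apply, if_neg (Ne.symm hj₁₂ : j₂ ≠ j₁), hj₂]
      have hL₁F : ∀ t, L₁ t ∈ ferrers hh μ := fun t =>
        (Finset.mem_sdiff.mp (hL₁enum.2 t)).1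
      have hcover₁ : ∀ x ∈ ferrers hh μ, x = ((i, j) : ℕ × ℕ) ∨
          x = ((i + f1, j + f2) : ℕ × ℕ) ∨ ∃ s, L₁ s = x := by
        intro x hx
        by_cases h1 : x = ((i, j) : ℕ × ℕ)
        · exact Or.inl h1
        by_cases h2 : x = ((i + f1, j + f2) : ℕ × ℕ)
        · exact Or.inr (Or.inl h2)
        refine Or.inr (Or.inr (hL₁enum.surj hD₁ x ?_))
        rw [Finset.mem_sdiff]
        exact ⟨hx, by simp [h1, h2]⟩
      have heg : ((g1, g2) : ℕ × ℕ) ≠ (0, 0) := pairne _ _ _ _ (by omega)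
      -- Equation II
      have heqII := pk_deltaOfList n (g1, g2) L₁
      rw [sum_two_terms _ hj₁₂ (fun t ht1 ht2 => by
        refine term_vanish (A := (i, j)) (B := (i + f1, j + f2)) hanti hL₁enum.1 hL₁F
          hcover₁ heg t ?_ ?_
        · show L₁ t ≠ (i + g1, j + g2)
          intro hc
          refine ht1 (hL₁enum.1 ?_)
          rw [hL₁j₁, hc]
          exact Prod.ext (by show i + g1 = K.1 - f1; omega)
            (by show j + g2 = K.2 - f2; omega)
        · show L₁ t ≠ (i + f1 + g1, j + f2 + g2)
          intro hc
          refine ht2 (hL₁enum.1 ?_)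
          rw [hL₁j₂, hc]
          exact Prod.ext (by show i + f1 + g1 = K.1; omega)
            (by show j + f2 + g2 = K.2; omega))] at heqII
      rw [hL₁j₁, hL₁j₂] at heqII
      rw [show (((K.1 - f1, K.2 - f2) : ℕ × ℕ).1 - g1, ((K.1 - f1, K.2 - f2) : ℕ × ℕ).2 - g2)
          = ((i, j) : ℕ × ℕ) from Prod.ext (by show K.1 - f1 - g1 = i; omega)
            (by show K.2 - f2 - g2 = j; omega)] at heqII
      rw [show ((K.1 - g1, K.2 - g2) : ℕ × ℕ) = ((i + f1, j + f2) : ℕ × ℕ) from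
        Prod.ext (by show K.1 - g1 = i + f1; omega) (by show K.2 - g2 = j + f2; omega)] at heqII
      rw [hL₁def, Function.update_idem] at heqII
      -- the two same-level terms
      set α := Function.update L₀ j₁ ((i, j) : ℕ × ℕ) with hαdef
      set β := Function.update L₀ j₂ ((K.1 - f1, K.2 - f2) : ℕ × ℕ) with hβdef
      have hγβ : Function.update (Function.update L₀ j₁ ((K.1 - f1, K.2 - f2) : ℕ × ℕ)) j₂
          ((i + f1, j + f2) : ℕ × ℕ) = β ∘ ⇑(Equiv.swap j₁ j₂) := by
        funext t
        rw [Function.comp_apply]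
        rcases eq_or_ne t j₁ with rfl | h1
        · rw [Equiv.swap_apply_left]
          rw [show Function.update (Function.update L₀ t ((K.1 - f1, K.2 - f2) : ℕ × ℕ)) j₂
              ((i + f1, j + f2) : ℕ × ℕ) t = ((K.1 - f1, K.2 - f2) : ℕ × ℕ) from by
            rw [Function.update_apply, if_neg hj₁₂, Function.update_self]]
          rw [hβdef, Function.update_self]
        rcases eq_or_ne t j₂ with rfl | h2
        · rw [Equiv.swap_apply_right]
          rw [Function.update_self, hβdef, Function.update_apply, if_neg hj₁₂, hj₁]
        · rw [Equiv.swap_apply_of_ne_of_ne h1 h2, hβdef,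
            Function.update_apply (Function.update L₀ j₁ ((K.1 - f1, K.2 - f2) : ℕ × ℕ)),
            if_neg h2, Function.update_apply, if_neg h1, Function.update_apply, if_neg h2]
      rw [hγβ, deltaOfList_swap n β hj₁₂] at heqII
      -- memberships of the two lower-level determinants
      set V := derivSpan (deltaOfFinset n (ferrers hh μ \ {(i, j), (i, j + 1)}))
        ⊔ derivSpan (deltaOfFinset n (ferrers hh μ \ {(i, j), (i + 1, j)})) with hVdef
      have hmemL₀ : deltaOfList n L₀ ∈ V := by
        rw [← deltaOfFinset_mem_iff hD₀ hL₀]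
        exact IH ((K.1 - f1) + (K.2 - f2)) (by omega) (K.1 - f1, K.2 - f2) hKfF
          (by show i ≤ K.1 - f1; omega) (by show j ≤ K.2 - f2; omega) hKfc rfl
      have hmemL₁ : deltaOfList n L₁ ∈ V := by
        rw [← deltaOfFinset_mem_iff hD₁ hL₁enum]
        exact IH ((i + f1) + (j + f2)) (by omega) (i + f1, j + f2) hCfF
          (by show i ≤ i + f1; omega) (by show j ≤ j + f2; omega) hCfc rfl
      have hP₁ : pk n (f1, f2) (deltaOfList n L₀) ∈ V := pk_mem_sup _ hmemL₀
      have hP₂ : pk n (g1, g2) (deltaOfList n L₁) ∈ V := pk_mem_sup _ hmemL₁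
      -- eliminate α
      set A₁ : ℚ := ((i + f1).descFactorial f1 : ℚ) * ((j + f2).descFactorial f2 : ℚ) with hA₁
      set A₂ : ℚ := (K.1.descFactorial f1 : ℚ) * (K.2.descFactorial f2 : ℚ) with hA₂
      set B₁ : ℚ := ((K.1 - f1).descFactorial g1 : ℚ) * ((K.2 - f2).descFactorial g2 : ℚ)
        with hB₁
      set B₂ : ℚ := (K.1.descFactorial g1 : ℚ) * (K.2.descFactorial g2 : ℚ) with hB₂
      have hcomb : (B₁ * A₂ + A₁ * B₂) • deltaOfList n β
          = B₁ • pk n (f1, f2) (deltaOfList n L₀) - A₁ • pk n (g1, g2) (deltaOfList n L₁) := by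
        rw [heqI, heqII]
        rw [smul_add, smul_add, smul_smul, smul_smul, smul_smul, smul_smul, smul_neg,
          add_smul]
        abel_nf
        rw [mul_comm A₁ B₁]
        abel
      have hdfpos : ∀ a b : ℕ, b ≤ a → (0 : ℚ) < (a.descFactorial b : ℚ) := by
        intro a b hba
        rw [Nat.cast_pos]
        refine Nat.pos_of_ne_zero fun hc => ?_
        rw [Nat.descFactorial_eq_zero_iff_lt] at hc
        omega
      have hcoefpos : (0 : ℚ) < B₁ * A₂ + A₁ * B₂ := by
        have h1 : (0:ℚ) < B₁ := by
          rw [hB₁]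
          exact mul_pos (hdfpos _ _ (by omega)) (hdfpos _ _ (by omega))
        have h2 : (0:ℚ) < A₂ := by
          rw [hA₂]
          exact mul_pos (hdfpos _ _ (by omega)) (hdfpos _ _ (by omega))
        have h3 : (0:ℚ) < A₁ := by
          rw [hA₁]
          exact mul_pos (hdfpos _ _ (by omega)) (hdfpos _ _ (by omega))
        have h4 : (0:ℚ) < B₂ := by
          rw [hB₂]
          exact mul_pos (hdfpos _ _ (by omega)) (hdfpos _ _ (by omega))
        exact add_pos (mul_pos h1 h2) (mul_pos h3 h4)
      have hβmem : deltaOfList n β ∈ V := by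
        refine (smul_mem_iff_of_ne_zero (ne_of_gt hcoefpos)).mp ?_
        rw [hcomb]
        exact Submodule.sub_mem _ (Submodule.smul_mem _ _ hP₁) (Submodule.smul_mem _ _ hP₂)
      -- β enumerates the target diagram
      have hβenum : IsEnum n (ferrers hh μ \ {(i, j), K}) β := by
        have h1 := isEnum_update hL₀ (j₀ := j₂) (v := ((K.1 - f1, K.2 - f2) : ℕ × ℕ)) hKfD₀
        rw [hj₂, hD₀def, holes_update₂ hKfF hcK.symm hKfK.symm (Ne.symm hKfc)] at h1
        exact h1
      have hcardK : (ferrers hh μ \ {(i, j), K}).card = n :=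
        card_sdiff_pair hcard hc1 hKF hcK
      rw [deltaOfFinset_mem_iff hcardK hβenum]
      exact hβmem


end Main
section Main2
open MvPolynomial

theorem pair_ne_of {a b a' b' : ℕ} (hor : a ≠ a' ∨ b ≠ b') : ((a, b) : ℕ × ℕ) ≠ (a', b') := by
  intro hc
  have h1 := congrArg Prod.fst hc
  have h2 := congrArg Prod.snd hc
  simp only at h1 h2
  tauto

theorem thmB {n hh i j : ℕ} {μ : ℕ → ℕ} (hanti : Antitone μ)
    (hcard : (ferrers hh μ).card = n + 2)
    (hc1 : (i, j) ∈ ferrers hh μ)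
    (H K : ℕ × ℕ) (hHF : H ∈ ferrers hh μ) (hKF : K ∈ ferrers hh μ)
    (hHi : i ≤ H.1) (hHj : j ≤ H.2) (hKi : i ≤ K.1) (hKj : j ≤ K.2)
    (hHK : H ≠ K) (hHc : H ≠ (i, j)) (hKc : K ≠ (i, j)) :
    deltaOfFinset n (ferrers hh μ \ {H, K})
      ∈ derivSpan (deltaOfFinset n (ferrers hh μ \ {(i, j), (i, j + 1)}))
        ⊔ derivSpan (deltaOfFinset n (ferrers hh μ \ {(i, j), (i + 1, j)})) := by
  obtain ⟨e1, he1⟩ := Nat.exists_eq_add_of_le hHi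
  obtain ⟨e2, he2⟩ := Nat.exists_eq_add_of_le hHj
  have hHcomp : H.1 ≠ i ∨ H.2 ≠ j := by
    by_contra hc
    push_neg at hc
    exact hHc (Prod.ext hc.1 hc.2)
  have hKcomp : K.1 ≠ i ∨ K.2 ≠ j := by
    by_contra hc
    push_neg at hc
    exact hKc (Prod.ext hc.1 hc.2)
  have hesum : 1 ≤ e1 + e2 := by omega
  have hHpair : ((i + e1, j + e2) : ℕ × ℕ) = H := Prod.ext (by simp; omega) (by simp; omega)
  have hcH : ((i, j) : ℕ × ℕ) ≠ H := Ne.symm hHc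
  have hcK : ((i, j) : ℕ × ℕ) ≠ K := Ne.symm hKc
  have hD : (ferrers hh μ \ {(i, j), K}).card = n := card_sdiff_pair hcard hc1 hKF hcK
  set D := ferrers hh μ \ {(i, j), K} with hDdef
  have hL := sortFun_isEnum n D hD
  set L := sortFun n D hD with hLdef
  have hHD : H ∈ D := by
    rw [hDdef, Finset.mem_sdiff]
    exact ⟨hHF, by simp [hHc, hHK]⟩
  obtain ⟨j₁, hj₁⟩ := hL.surj hD H hHD
  have hLF : ∀ t, L t ∈ ferrers hh μ := fun t => (Finset.mem_sdiff.mp (hL.2 t)).1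
  have hcover : ∀ x ∈ ferrers hh μ, x = ((i, j) : ℕ × ℕ) ∨ x = K ∨ ∃ s, L s = x := by
    intro x hx
    by_cases h1 : x = ((i, j) : ℕ × ℕ)
    · exact Or.inl h1
    by_cases h2 : x = K
    · exact Or.inr (Or.inl h2)
    refine Or.inr (Or.inr (hL.surj hD x ?_))
    rw [hDdef, Finset.mem_sdiff]
    exact ⟨hx, by simp [h1, h2]⟩
  have he : ((e1, e2) : ℕ × ℕ) ≠ (0, 0) := pair_ne_of (by omega)
  have hciD : ((i, j) : ℕ × ℕ) ∉ D := by rw [hDdef, Finset.mem_sdiff]; simp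
  have hαenum : IsEnum n (ferrers hh μ \ {H, K}) (Function.update L j₁ ((i, j) : ℕ × ℕ)) := by
    have h1 := isEnum_update hL (j₀ := j₁) (v := ((i, j) : ℕ × ℕ)) hciD
    rw [hj₁, hDdef, holes_update₁ hc1 hHc hHK hcK] at h1
    exact h1
  have hcardHK : (ferrers hh μ \ {H, K}).card = n := card_sdiff_pair hcard hHF hKF hHK
  have hmemL : deltaOfList n L
      ∈ derivSpan (deltaOfFinset n (ferrers hh μ \ {(i, j), (i, j + 1)}))
        ⊔ derivSpan (deltaOfFinset n (ferrers hh μ \ {(i, j), (i + 1, j)})) := by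
    rw [← deltaOfFinset_mem_iff hD hL]
    exact thmA hanti hcard hc1 (K.1 + K.2) K hKF hKi hKj hKc rfl
  have hpk := pk_mem_sup (n := n) (e1, e2) hmemL
  have hA₁ : ((H.1.descFactorial e1 : ℚ) * (H.2.descFactorial e2 : ℚ)) ≠ 0 := by
    refine mul_ne_zero ?_ ?_ <;>
    · rw [Nat.cast_ne_zero]
      intro hc
      rw [Nat.descFactorial_eq_zero_iff_lt] at hc
      omega
  have hvalα : ((H.1 - e1, H.2 - e2) : ℕ × ℕ) = ((i, j) : ℕ × ℕ) :=
    Prod.ext (by show H.1 - e1 = i; omega) (by show H.2 - e2 = j; omega)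
  rw [deltaOfFinset_mem_iff hcardHK hαenum]
  by_cases hK'F : ((K.1 + e1, K.2 + e2) : ℕ × ℕ) ∈ ferrers hh μ
  · -- two-term case
    have hK'c : ((K.1 + e1, K.2 + e2) : ℕ × ℕ) ≠ (i, j) := pair_ne_of (by omega)
    have hK'K : ((K.1 + e1, K.2 + e2) : ℕ × ℕ) ≠ K := by
      intro hc
      have h1 := congrArg Prod.fst hc
      have h2 := congrArg Prod.snd hc
      simp only at h1 h2
      omega
    have hK'D : ((K.1 + e1, K.2 + e2) : ℕ × ℕ) ∈ D := by
      rw [hDdef, Finset.mem_sdiff]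
      exact ⟨hK'F, by simp [hK'c, hK'K]⟩
    obtain ⟨j₂, hj₂⟩ := hL.surj hD _ hK'D
    have hj₁₂ : j₁ ≠ j₂ := by
      intro hc
      have : H = ((K.1 + e1, K.2 + e2) : ℕ × ℕ) := by rw [← hj₁, hc, hj₂]
      have h1 := congrArg Prod.fst this
      have h2 := congrArg Prod.snd this
      simp only at h1 h2
      rcases hKcomp with hx | hx <;> omega
    have heq := pk_deltaOfList n (e1, e2) L
    rw [sum_two_terms _ hj₁₂ (fun t ht1 ht2 => by
      refine term_vanish (A := (i, j)) (B := K) hanti hL.1 hLF hcover he t ?_ ?_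
      · show L t ≠ (i + e1, j + e2)
        intro hc
        exact ht1 (hL.1 (by rw [hj₁, ← hHpair, hc]))
      · show L t ≠ (K.1 + e1, K.2 + e2)
        intro hc
        exact ht2 (hL.1 (by rw [hj₂, hc])))] at heq
    rw [hj₁, hj₂, hvalα] at heq
    rw [show (((K.1 + e1, K.2 + e2) : ℕ × ℕ).1 - e1, ((K.1 + e1, K.2 + e2) : ℕ × ℕ).2 - e2)
        = K from Prod.ext (by show K.1 + e1 - e1 = K.1; omega)
          (by show K.2 + e2 - e2 = K.2; omega)] at heq
    have hKD : K ∉ D := by rw [hDdef, Finset.mem_sdiff]; simp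
    have hυenum : IsEnum n (ferrers hh μ \ {(i, j), (K.1 + e1, K.2 + e2)})
        (Function.update L j₂ K) := by
      have h1 := isEnum_update hL (j₀ := j₂) (v := K) hKD
      rw [hj₂, hDdef, holes_update₂ hKF hK'c hK'K hcK] at h1
      exact h1
    have hcardK' : (ferrers hh μ \ {(i, j), (K.1 + e1, K.2 + e2)}).card = n :=
      card_sdiff_pair hcard hc1 hK'F (Ne.symm hK'c)
    have hmemυ : deltaOfList n (Function.update L j₂ K)
        ∈ derivSpan (deltaOfFinset n (ferrers hh μ \ {(i, j), (i, j + 1)}))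
          ⊔ derivSpan (deltaOfFinset n (ferrers hh μ \ {(i, j), (i + 1, j)})) := by
      rw [← deltaOfFinset_mem_iff hcardK' hυenum]
      exact thmA hanti hcard hc1 ((K.1 + e1) + (K.2 + e2)) (K.1 + e1, K.2 + e2) hK'F
        (by show i ≤ K.1 + e1; omega) (by show j ≤ K.2 + e2; omega) hK'c rfl
    refine (smul_mem_iff_of_ne_zero hA₁).mp ?_
    have hsolve : ((H.1.descFactorial e1 : ℚ) * (H.2.descFactorial e2 : ℚ))
        • deltaOfList n (Function.update L j₁ ((i, j) : ℕ × ℕ))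
        = pk n (e1, e2) (deltaOfList n L)
          - (((K.1 + e1).descFactorial e1 : ℚ) * ((K.2 + e2).descFactorial e2 : ℚ))
            • deltaOfList n (Function.update L j₂ K) := by
      rw [heq]
      abel
    rw [hsolve]
    exact Submodule.sub_mem _ hpk (Submodule.smul_mem _ _ hmemυ)
  · -- single-term case
    have heq := pk_deltaOfList n (e1, e2) L
    rw [sum_one_term _ j₁ (fun t ht1 => by
      refine term_vanish (A := (i, j)) (B := K) hanti hL.1 hLF hcover he t ?_ ?_
      · show L t ≠ (i + e1, j + e2)
        intro hc
        exact ht1 (hL.1 (by rw [hj₁, ← hHpair, hc]))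
      · show L t ≠ (K.1 + e1, K.2 + e2)
        intro hc
        exact hK'F (hc ▸ hLF t))] at heq
    rw [hj₁, hvalα] at heq
    refine (smul_mem_iff_of_ne_zero hA₁).mp ?_
    rw [← heq]
    exact hpk

end Main2

/-- Remark 3 (second part): for a partition `μ` of `n + 2` (with `h` rows) and a cell
`(i,j)` such that `(i+1,j)` and `(i,j+1)` are also in `μ`, the space `M²_{i,j}(X,Y)`
is the sum of the two spaces attached to the two ``partition-shaped'' pairs of holes;
in particular every `Δ_{μ/{h₁,h₂}}` with `h₁ ≠ h₂` in the shadow of `(i,j)` lies in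
that sum. -/
theorem statement4 (n h i j : ℕ) (μ : ℕ → ℕ)
    (hanti : Antitone μ) (hpos : ∀ r, r < h → 0 < μ r) (hzero : ∀ r, h ≤ r → μ r = 0)
    (hcard : (ferrers h μ).card = n + 2)
    (hc1 : (i, j) ∈ ferrers h μ) (hc2 : (i + 1, j) ∈ ferrers h μ)
    (hc3 : (i, j + 1) ∈ ferrers h μ) :
    Mk n 2 (ferrers h μ) i j
      = derivSpan (deltaOfFinset n (ferrers h μ \ {(i, j), (i, j + 1)}))
        ⊔ derivSpan (deltaOfFinset n (ferrers h μ \ {(i, j), (i + 1, j)})) ∧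
    ∀ h₁ h₂ : ℕ × ℕ, h₁ ∈ shadowF (ferrers h μ) i j → h₂ ∈ shadowF (ferrers h μ) i j →
      h₁ ≠ h₂ →
      deltaOfFinset n (ferrers h μ \ {h₁, h₂})
        ∈ derivSpan (deltaOfFinset n (ferrers h μ \ {(i, j), (i, j + 1)}))
          ⊔ derivSpan (deltaOfFinset n (ferrers h μ \ {(i, j), (i + 1, j)})) := by
  have part2 : ∀ h₁ h₂ : ℕ × ℕ, h₁ ∈ shadowF (ferrers h μ) i j →
      h₂ ∈ shadowF (ferrers h μ) i j → h₁ ≠ h₂ →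
      deltaOfFinset n (ferrers h μ \ {h₁, h₂})
        ∈ derivSpan (deltaOfFinset n (ferrers h μ \ {(i, j), (i, j + 1)}))
          ⊔ derivSpan (deltaOfFinset n (ferrers h μ \ {(i, j), (i + 1, j)})) := by
    intro h₁ h₂ hs₁ hs₂ hne
    rw [shadowF, Finset.mem_filter] at hs₁ hs₂
    obtain ⟨h₁F, h₁i, h₁j⟩ := hs₁
    obtain ⟨h₂F, h₂i, h₂j⟩ := hs₂
    by_cases hc₁ : h₁ = ((i, j) : ℕ × ℕ)
    · subst hc₁
      exact thmA hanti hcard hc1 (h₂.1 + h₂.2) h₂ h₂F h₂i h₂j (fun hc => hne hc.symm) rfl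
    by_cases hc₂ : h₂ = ((i, j) : ℕ × ℕ)
    · subst hc₂
      rw [show ({h₁, ((i,j) : ℕ × ℕ)} : Finset (ℕ × ℕ)) = {((i,j) : ℕ × ℕ), h₁} from
        Finset.pair_comm h₁ (i, j)]
      exact thmA hanti hcard hc1 (h₁.1 + h₁.2) h₁ h₁F h₁i h₁j hc₁ rfl
    · exact thmB hanti hcard hc1 h₁ h₂ h₁F h₂F h₁i h₁j h₂i h₂j hne hc₁ hc₂
  refine ⟨?_, part2⟩
  apply le_antisymm
  · rw [Mk]
    refine iSup₂_le fun S hS => ?_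
    rw [Finset.mem_powersetCard] at hS
    obtain ⟨hsub, hcard2⟩ := hS
    obtain ⟨a, b, hab, rfl⟩ := Finset.card_eq_two.mp hcard2
    refine derivSpan_le_of_monClosed ?_ (fun m x hx => monDiff_mem_sup m hx)
    exact part2 a b (hsub (by simp)) (hsub (by simp)) hab
  · refine sup_le ?_ ?_
    · have hS₁ : ({((i, j) : ℕ × ℕ), (i, j + 1)} : Finset (ℕ × ℕ))
          ∈ Finset.powersetCard 2 (shadowF (ferrers h μ) i j) := by
        rw [Finset.mem_powersetCard]
        constructor
        · intro x hx
          simp only [Finset.mem_insert, Finset.mem_singleton] at hx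
          rcases hx with rfl | rfl
          · exact Finset.mem_filter.mpr ⟨hc1, le_rfl, le_rfl⟩
          · exact Finset.mem_filter.mpr ⟨hc3, le_rfl, by omega⟩
        · rw [Finset.card_insert_of_notMem (by
            simp only [Finset.mem_singleton, Prod.mk.injEq, not_and]
            intro _
            omega), Finset.card_singleton]
      rw [Mk]
      exact le_iSup₂ (f := fun S (_ : S ∈ Finset.powersetCard 2 (shadowF (ferrers h μ) i j)) =>
        derivSpan (deltaOfFinset n (ferrers h μ \ S))) _ hS₁
    · have hS₂ : ({((i, j) : ℕ × ℕ), (i + 1, j)} : Finset (ℕ × ℕ))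
          ∈ Finset.powersetCard 2 (shadowF (ferrers h μ) i j) := by
        rw [Finset.mem_powersetCard]
        constructor
        · intro x hx
          simp only [Finset.mem_insert, Finset.mem_singleton] at hx
          rcases hx with rfl | rfl
          · exact Finset.mem_filter.mpr ⟨hc1, le_rfl, le_rfl⟩
          · exact Finset.mem_filter.mpr ⟨hc2, by omega, le_rfl⟩
        · rw [Finset.card_insert_of_notMem (by
            simp only [Finset.mem_singleton, Prod.mk.injEq, not_and]
            intro hcon
            omega), Finset.card_singleton]
      rw [Mk]
      exact le_iSup₂ (f := fun S (_ : S ∈ Finset.powersetCard 2 (shadowF (ferrers h μ) i j)) =>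
        derivSpan (deltaOfFinset n (ferrers h μ \ S))) _ hS₂
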